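/- Let G be a free group with free generating set X, and define α: G → S where S = {1} ∪ X ∪ X⁻¹ by α(1) = 1 and α(g) = the first letter of the reduced word representing g for g ≠ 1. Then α is almost-right-G-invariant, and for every function β: G → S almost equal to α, the right-stabilizer {g ∈ G : βg = β} is trivial (hence finite). -/

import Mathlib

/-- `α : G → S` is almost-right-`G`-invariant. -/
def AlmostRightInvariant {G : Type*} [Group G] {S : Type*} (α : G → S) : Prop :=
  ∀ (g : G) (s : S),
    (symmDiff ((fun h => h * g) '' (α ⁻¹' {s})) (α ⁻¹' {s})).Finite

/-- Two functions are almost equal if they differ at finitely many points. -/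
def AlmostEq {G S : Type*} (α β : G → S) : Prop := {g : G | α g ≠ β g}.Finite

/-- The "first letter" function on a free group: `1 ↦ none` and a nontrivial element maps
to the first letter (a generator or its inverse, encoded in `X × Bool`) of the reduced
word representing it. -/
def firstLetter {X : Type*} [DecidableEq X] (g : FreeGroup X) : Option (X × Bool) :=
  g.toWord.head?

section Aux

variable {X : Type*} [DecidableEq X]

/-- Non-cancelling adjacency of letters. -/
def NC : X × Bool → X × Bool → Prop := fun a b => ¬(a.1 = b.1 ∧ a.2 = !b.2)

lemma chain'_reduce (L : List (X × Bool)) : List.IsChain NC (FreeGroup.reduce L) := by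
  induction L with
  | nil => simp
  | cons x L ih =>
    rw [FreeGroup.reduce.cons]
    rcases h : FreeGroup.reduce L with _ | ⟨hd, tl⟩
    · simp
    · rw [h] at ih
      by_cases hc : x.1 = hd.1 ∧ x.2 = !hd.2
      · simpa only [if_pos hc, List.tail_cons] using ih.tail
      · simp only [if_neg hc]
        exact List.isChain_cons_cons.2 ⟨hc, ih⟩

lemma reduce_eq_self {L : List (X × Bool)} (h : List.IsChain NC L) :
    FreeGroup.reduce L = L := by
  induction L with
  | nil => rfl
  | cons x L ih =>
    rw [FreeGroup.reduce.cons, ih h.tail]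
    cases L with
    | nil => rfl
    | cons hd tl =>
      have hP : NC x hd := (List.isChain_cons_cons.1 h).1
      show (if x.1 = hd.1 ∧ x.2 = !hd.2 then tl else x :: hd :: tl) = x :: hd :: tl
      rw [if_neg hP]

lemma chain'_toWord (g : FreeGroup X) : List.IsChain NC g.toWord := by
  rw [← FreeGroup.reduce_toWord]; exact chain'_reduce _

lemma inv_single (a : X × Bool) :
    (FreeGroup.mk [a])⁻¹ = FreeGroup.mk [(a.1, !a.2)] := by
  rw [FreeGroup.inv_mk]; simp [FreeGroup.invRev]

lemma head?_dropLast' {A : Type*} (l : List A) (h : 2 ≤ l.length) :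
    l.dropLast.head? = l.head? := by
  match l, h with
  | x :: y :: rest, _ => simp

lemma firstLetter_mul_single (h : FreeGroup X) (a : X × Bool) (hl : 2 ≤ h.toWord.length) :
    firstLetter (h * FreeGroup.mk [a]) = firstLetter h := by
  have hne : h.toWord ≠ [] := by intro e; rw [e] at hl; simp at hl
  by_cases hc : (h.toWord.getLast hne).1 = a.1 ∧ (h.toWord.getLast hne).2 = !a.2
  · have hdecomp : h.toWord.dropLast ++ [h.toWord.getLast hne] = h.toWord :=
      List.dropLast_append_getLast hne
    have hlast : FreeGroup.mk [h.toWord.getLast hne] = (FreeGroup.mk [a])⁻¹ := by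
      rw [inv_single]
      congr 1
      exact congrArg (fun z => [z]) (Prod.ext hc.1 hc.2)
    have key : h * FreeGroup.mk [a] = FreeGroup.mk h.toWord.dropLast := by
      conv_lhs => rw [← FreeGroup.mk_toWord (x := h), ← hdecomp]
      rw [← FreeGroup.mul_mk, hlast, mul_assoc, inv_mul_cancel, mul_one]
    show (h * FreeGroup.mk [a]).toWord.head? = h.toWord.head?
    rw [key, FreeGroup.toWord_mk,
      reduce_eq_self ((chain'_toWord h).prefix (List.dropLast_prefix _)),
      head?_dropLast' _ hl]
  · have hch : List.IsChain NC (h.toWord ++ [a]) := by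
      apply List.isChain_append.2
      refine ⟨chain'_toWord h, List.isChain_singleton _, ?_⟩
      intro x hx y hy
      rw [List.getLast?_eq_getLast hne] at hx
      simp only [Option.mem_def, Option.some.injEq, List.head?_cons] at hx hy
      subst hx; subst hy
      exact hc
    have hmul : h * FreeGroup.mk [a] = FreeGroup.mk (h.toWord ++ [a]) := by
      conv_lhs => rw [← FreeGroup.mk_toWord (x := h)]
      rw [FreeGroup.mul_mk]
    show (h * FreeGroup.mk [a]).toWord.head? = h.toWord.head?
    rw [hmul, FreeGroup.toWord_mk, reduce_eq_self hch]
    obtain ⟨z, t, ht⟩ := List.exists_cons_of_ne_nil hne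
    rw [ht]
    simp

lemma bad_single [Finite X] (a : X × Bool) :
    {h : FreeGroup X | firstLetter (h * FreeGroup.mk [a]) ≠ firstLetter h}.Finite := by
  apply Set.Finite.subset
    (Set.Finite.preimage FreeGroup.toWord_injective.injOn
      (List.finite_length_le (X × Bool) 1))
  intro h hh
  simp only [Set.mem_preimage, Set.mem_setOf_eq]
  by_contra hlen
  push_neg at hlen
  exact hh (firstLetter_mul_single h a hlen)

lemma bad_finite [Finite X] (g : FreeGroup X) :
    {h : FreeGroup X | firstLetter (h * g) ≠ firstLetter h}.Finite := by
  induction g using FreeGroup.induction_on with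
  | C1 => simp
  | of x => exact bad_single (x, true)
  | inv_of x _ =>
    have : (FreeGroup.of x : FreeGroup X)⁻¹ = FreeGroup.mk [(x, false)] := by
      have h1 : (FreeGroup.of x : FreeGroup X) = FreeGroup.mk [(x, true)] := rfl
      rw [h1, inv_single]
      simp
    rw [this]
    exact bad_single (x, false)
  | mul x y hx hy =>
    apply Set.Finite.subset (hx.union (hy.image (fun k => k * x⁻¹)))
    intro h hh
    simp only [Set.mem_setOf_eq] at hh
    by_contra hcon
    rw [Set.mem_union] at hcon
    push_neg at hcon
    obtain ⟨h1, h2⟩ := hcon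
    simp only [Set.mem_setOf_eq, not_not] at h1
    have h3 : firstLetter (h * x * y) = firstLetter (h * x) := by
      by_contra h4
      exact h2 ⟨h * x, h4, by group⟩
    rw [← mul_assoc] at hh
    exact hh (h3.trans h1)

lemma pow_mk_word (L : List (X × Bool)) (hc : List.IsChain NC L) (hne : L ≠ [])
    (hj : ∀ x ∈ L.getLast?, ∀ y ∈ L.head?, NC x y) (n : ℕ) :
    ∃ W : List (X × Bool), FreeGroup.mk L ^ (n + 1) = FreeGroup.mk W ∧ List.IsChain NC W ∧
      W.head? = L.head? ∧ W.getLast? = L.getLast? ∧ W.length = (n + 1) * L.length := by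
  induction n with
  | zero => exact ⟨L, by rw [pow_one], hc, rfl, rfl, by ring⟩
  | succ n ih =>
    obtain ⟨W, hW1, hW2, hW3, hW4, hW5⟩ := ih
    have hWne : W ≠ [] := by
      intro e
      rw [e] at hW5
      simp only [List.length_nil] at hW5
      have : L.length ≠ 0 := fun e2 => hne (List.length_eq_zero_iff.mp e2)
      exact Nat.mul_ne_zero (Nat.succ_ne_zero n) this hW5.symm
    refine ⟨L ++ W, ?_, ?_, ?_, ?_, ?_⟩
    · rw [pow_succ', hW1, FreeGroup.mul_mk]
    · exact List.isChain_append.2 ⟨hc, hW2, fun x hx y hy => hj x hx y (hW3 ▸ hy)⟩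
    · rcases L with _ | ⟨z, t⟩
      · exact absurd rfl hne
      · simp
    · rw [List.getLast?_append_of_ne_nil _ hWne, hW4]
    · simp only [List.length_append, hW5]; ring

lemma fl_head_getLast {X' : Type*} [DecidableEq X'] (g : FreeGroup X') (hne : g.toWord ≠ []) :
    g⁻¹.toWord.head? = g.toWord.getLast?.map (fun a => (a.1, !a.2)) ∧
    g⁻¹.toWord.getLast? = g.toWord.head?.map (fun a => (a.1, !a.2)) := by
  rw [FreeGroup.toWord_inv]
  unfold FreeGroup.invRev
  constructor
  · rw [List.head?_reverse]
    rw [List.getLast?_eq_head?_reverse, List.getLast?_eq_head?_reverse, ← List.map_reverse,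
      List.head?_map]
  · rw [List.getLast?_reverse, List.head?_map]

lemma NC_flip {X : Type*} {a b : X × Bool} (h : NC a b) : NC (b.1, !b.2) (a.1, !a.2) := by
  intro e
  obtain ⟨e1, e2⟩ := e
  have e1' : b.1 = a.1 := e1
  have e2' : (!b.2) = !!a.2 := e2
  rw [Bool.not_not] at e2'
  exact h ⟨e1'.symm, e2'.symm⟩

lemma main_lemma {X : Type*} [DecidableEq X] [Finite X] :
    ∀ (n : ℕ) (g : FreeGroup X), g.toWord.length ≤ n → g ≠ 1 →
    ∀ β : FreeGroup X → Option (X × Bool), AlmostEq firstLetter β →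
    (∀ h, β (h * g) = β h) → False := by
  intro n
  induction n with
  | zero =>
    intro g hl hg _ _ _
    exact hg (FreeGroup.toWord_eq_nil_iff.mp (List.length_eq_zero_iff.mp (Nat.le_zero.mp hl)))
  | succ n ih =>
    intro g hlen hg β hae hstab
    have hne : g.toWord ≠ [] := fun e => hg (FreeGroup.toWord_eq_nil_iff.mp e)
    by_cases hj : NC (g.toWord.getLast hne) (g.toWord.head hne)
    · -- base case: the ends of g's word do not cancel
      have hpow : ∀ (k : ℕ) (h : FreeGroup X), β (h * g ^ k) = β h := by
        intro k
        induction k with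
        | zero => simp
        | succ k ihk => intro h; rw [pow_succ, ← mul_assoc, hstab, ihk]
      have hβg : ∀ k : ℕ, β (g ^ k) = β 1 := fun k => by simpa using hpow k 1
      have hβginv : ∀ k : ℕ, β (g⁻¹ ^ k) = β 1 := by
        intro k
        have h1 := hpow k (g⁻¹ ^ k)
        rw [inv_pow] at h1
        rw [inv_mul_cancel] at h1
        rw [inv_pow]
        exact h1.symm
      have hjj : ∀ x ∈ g.toWord.getLast?, ∀ y ∈ g.toWord.head?, NC x y := by
        intro x hx y hy
        rw [List.getLast?_eq_getLast hne] at hx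
        rw [List.head?_eq_head hne] at hy
        simp only [Option.mem_def, Option.some.injEq] at hx hy
        subst hx; subst hy
        exact hj
      have hgpow : ∀ k : ℕ, (g ^ (k + 1)).toWord.head? = g.toWord.head? ∧
          (g ^ (k + 1)).toWord.length = (k + 1) * g.toWord.length := by
        intro k
        obtain ⟨W, h1, h2, h3, _, h5⟩ :=
          pow_mk_word g.toWord (chain'_toWord g) hne hjj k
        rw [FreeGroup.mk_toWord] at h1
        rw [h1, FreeGroup.toWord_mk, reduce_eq_self h2]
        exact ⟨h3, h5⟩
      -- the inverse also satisfies the no-cancel condition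
      have hginv : g⁻¹ ≠ 1 := fun e => hg (by simpa using congrArg (·⁻¹) e)
      have hne' : g⁻¹.toWord ≠ [] := fun e => hginv (FreeGroup.toWord_eq_nil_iff.mp e)
      obtain ⟨hih, hil⟩ := fl_head_getLast g hne
      have hjj' : ∀ x ∈ g⁻¹.toWord.getLast?, ∀ y ∈ g⁻¹.toWord.head?, NC x y := by
        intro x hx y hy
        rw [hil] at hx
        rw [hih] at hy
        rw [List.getLast?_eq_getLast hne] at hy
        rw [List.head?_eq_head hne] at hx
        simp only [Option.mem_def, Option.map_some, Option.some.injEq] at hx hy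
        subst hx; subst hy
        exact NC_flip hj
      have hginvpow : ∀ k : ℕ, (g⁻¹ ^ (k + 1)).toWord.head? = g⁻¹.toWord.head? ∧
          (g⁻¹ ^ (k + 1)).toWord.length = (k + 1) * g⁻¹.toWord.length := by
        intro k
        obtain ⟨W, h1, h2, h3, _, h5⟩ :=
          pow_mk_word g⁻¹.toWord (chain'_toWord g⁻¹) hne' hjj' k
        rw [FreeGroup.mk_toWord] at h1
        rw [h1, FreeGroup.toWord_mk, reduce_eq_self h2]
        exact ⟨h3, h5⟩
      -- choose a suitable exponent avoiding the finite difference set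
      have hL0 : g.toWord.length ≠ 0 := fun e => hne (List.length_eq_zero_iff.mp e)
      have hL0' : g⁻¹.toWord.length ≠ 0 := fun e => hne' (List.length_eq_zero_iff.mp e)
      have hinj1 : Function.Injective (fun k : ℕ => g ^ (k + 1)) := by
        intro a b hab
        have h1 := congrArg (fun z : FreeGroup X => z.toWord.length) hab
        simp only [(hgpow a).2, (hgpow b).2] at h1
        have := Nat.eq_of_mul_eq_mul_right (Nat.pos_of_ne_zero hL0) h1
        omega
      have hinj2 : Function.Injective (fun k : ℕ => g⁻¹ ^ (k + 1)) := by
        intro a b hab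
        have h1 := congrArg (fun z : FreeGroup X => z.toWord.length) hab
        simp only [(hginvpow a).2, (hginvpow b).2] at h1
        have := Nat.eq_of_mul_eq_mul_right (Nat.pos_of_ne_zero hL0') h1
        omega
      have hfin : (((fun k : ℕ => g ^ (k + 1)) ⁻¹' {h | firstLetter h ≠ β h}) ∪
          ((fun k : ℕ => g⁻¹ ^ (k + 1)) ⁻¹' {h | firstLetter h ≠ β h})).Finite :=
        (hae.preimage hinj1.injOn).union (hae.preimage hinj2.injOn)
      obtain ⟨k, hk⟩ := hfin.infinite_compl.nonempty
      simp only [Set.mem_compl_iff, Set.mem_union, Set.mem_preimage, Set.mem_setOf_eq,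
        not_or, not_not] at hk
      obtain ⟨hk1, hk2⟩ := hk
      have e1 : firstLetter (g ^ (k + 1)) = β 1 := hk1.trans (hβg (k + 1))
      have e2 : firstLetter (g⁻¹ ^ (k + 1)) = β 1 := hk2.trans (hβginv (k + 1))
      have e3 : g.toWord.head? = g⁻¹.toWord.head? := by
        have := e1.trans e2.symm
        unfold firstLetter at this
        rw [(hgpow k).1, (hginvpow k).1] at this
        exact this
      rw [hih, List.head?_eq_head hne, List.getLast?_eq_getLast hne] at e3
      simp only [Option.map_some, Option.some.injEq] at e3
      apply hj
      constructor
      · have := congrArg Prod.fst e3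
        simp only at this
        exact this.symm
      · have := congrArg Prod.snd e3
        simp only at this
        rw [this]
        simp
    · -- inductive case: conjugate to shorten
      have hj' : (g.toWord.getLast hne).1 = (g.toWord.head hne).1 ∧
          (g.toWord.getLast hne).2 = !(g.toWord.head hne).2 := by
        by_contra hcon
        exact hj hcon
      obtain ⟨x, M, hxM⟩ := List.exists_cons_of_ne_nil hne
      have hhead : g.toWord.head hne = x := by simp [hxM]
      have hMne : M ≠ [] := by
        intro e
        rw [e] at hxM
        have h1 : g.toWord.getLast hne = x := by simp [hxM]
        rw [h1, hhead] at hj'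
        have := hj'.2
        simp at this
      have hlastM : M.getLast hMne = g.toWord.getLast hne := by
        simp only [hxM]
        exact (List.getLast_cons hMne).symm
      have hm : M.getLast hMne = (x.1, !x.2) := by
        rw [hlastM]
        exact Prod.ext (hhead ▸ hj'.1) (hhead ▸ hj'.2)
      have hMdec : M.dropLast ++ [(x.1, !x.2)] = M := by
        rw [← hm]
        exact List.dropLast_append_getLast hMne
      have hgdec : g = FreeGroup.mk [x] * FreeGroup.mk M.dropLast * (FreeGroup.mk [x])⁻¹ := by
        rw [inv_single, FreeGroup.mul_mk, FreeGroup.mul_mk]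
        conv_lhs => rw [← FreeGroup.mk_toWord (x := g), hxM, ← hMdec]
        rfl
      set w := FreeGroup.mk M.dropLast with hw
      have hw1 : w ≠ 1 := by
        intro e
        apply hg
        rw [hgdec, e, mul_one, mul_inv_cancel]
      have hwlen : w.toWord.length ≤ n := by
        have h1 : w.toWord.length ≤ M.dropLast.length := by
          rw [hw, FreeGroup.toWord_mk]
          exact FreeGroup.Red.length_le FreeGroup.reduce.red
        have h2 : M.length + 1 ≤ n + 1 := by
          have := hlen
          rw [hxM] at this
          simpa using this
        have h3 : M.dropLast.length = M.length - 1 := by simp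
        have h4 : M.length ≠ 0 := fun e => hMne (List.length_eq_zero_iff.mp e)
        omega
      set β' := fun h => β (h * (FreeGroup.mk [x])⁻¹) with hβ'
      have hstab' : ∀ h, β' (h * w) = β' h := by
        intro h
        show β (h * w * (FreeGroup.mk [x])⁻¹) = β (h * (FreeGroup.mk [x])⁻¹)
        have h1 : h * w * (FreeGroup.mk [x])⁻¹ = (h * (FreeGroup.mk [x])⁻¹) * g := by
          rw [hgdec]; group
        rw [h1, hstab]
      have hae' : AlmostEq firstLetter β' := by
        apply Set.Finite.subset
          ((bad_finite (FreeGroup.mk [x])⁻¹).union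
            (hae.image (fun k => k * FreeGroup.mk [x])))
        intro h hh
        simp only [Set.mem_setOf_eq] at hh
        by_contra hcon
        rw [Set.mem_union] at hcon
        push_neg at hcon
        obtain ⟨h1, h2⟩ := hcon
        simp only [Set.mem_setOf_eq, not_not] at h1
        have h3 : firstLetter (h * (FreeGroup.mk [x])⁻¹) = β (h * (FreeGroup.mk [x])⁻¹) := by
          by_contra h4
          exact h2 ⟨h * (FreeGroup.mk [x])⁻¹, h4, by group⟩
        exact hh (h1.symm.trans h3)
      exact ih w hwlen hw1 β' hae' hstab'

end Aux

/-- For a finitely generated free group `G = F(X)`, the first-letter function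
`α : G → {1} ∪ X ∪ X⁻¹` is almost-right-invariant, and every `β` almost equal to `α`
has trivial right-stabilizer. -/
theorem freeGroup_firstLetter_almost_invariant {X : Type*} [DecidableEq X] [Finite X] :
    AlmostRightInvariant (firstLetter (X := X)) ∧
      ∀ β : FreeGroup X → Option (X × Bool), AlmostEq (firstLetter (X := X)) β →
        ∀ g : FreeGroup X, (∀ h : FreeGroup X, β (h * g) = β h) → g = 1 := by
  constructor
  · intro g s
    apply Set.Finite.subset ((bad_finite g).image (fun h => h * g))
    intro k hk
    rcases Set.mem_symmDiff.1 hk with ⟨⟨h, hh, rfl⟩, hnk⟩ | ⟨hk1, hk2⟩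
    · simp only [Set.mem_preimage, Set.mem_singleton_iff] at hh hnk
      exact ⟨h, fun e => hnk (e.trans hh), rfl⟩
    · simp only [Set.mem_preimage, Set.mem_singleton_iff] at hk1
      refine ⟨k * g⁻¹, ?_, by group⟩
      intro e
      apply hk2
      refine ⟨k * g⁻¹, ?_, by group⟩
      simp only [Set.mem_preimage, Set.mem_singleton_iff]
      rw [← e]
      have h1 : k * g⁻¹ * g = k := by group
      rw [h1]
      exact hk1
  · intro β hae g hstab
    by_contra hg
    exact main_lemma g.toWord.length g le_rfl hg β hae hstab
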